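/- Let k ∈ {1,2} and p > 2k−1. The bilinear form a_p(u,v) = ∫₀^∞ (−2k u(2x) + u(x)) v(x) x^p dx on L²(x^p dx) is bounded and coercive: there exists α > 0 (explicitly α = 1 − 2k·2^{−(p+1)/2}) such that a_p(u,u) ≥ α ‖u‖²_{L²(x^p dx)} for all u, where the cross term is bounded via Cauchy–Schwarz by ∫ |2k u(2x) u(x)| x^p dx ≤ 2k·2^{−(p+1)/2} ‖u‖²_{L²(x^p dx)}. -/

import Mathlib

open MeasureTheory Set

private lemma aux_cs {μ : Measure ℝ} {F G : ℝ → ℝ} (hF : AEStronglyMeasurable F μ)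
    (hG : AEStronglyMeasurable G μ)
    (hF2 : Integrable (fun x => F x ^ 2) μ) (hG2 : Integrable (fun x => G x ^ 2) μ) :
    ∫ x, |F x * G x| ∂μ ≤
      Real.sqrt (∫ x, F x ^ 2 ∂μ) * Real.sqrt (∫ x, G x ^ 2 ∂μ) := by
  have hpq : Real.HolderConjugate 2 2 := ⟨by norm_num, by norm_num, by norm_num⟩
  have h2 : (ENNReal.ofReal 2) = 2 := by
    simp
  have hFa : MemLp (fun x => |F x|) (ENNReal.ofReal 2) μ := by
    rw [h2]
    simpa [Real.norm_eq_abs] using ((memLp_two_iff_integrable_sq hF).2 hF2).norm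
  have hGa : MemLp (fun x => |G x|) (ENNReal.ofReal 2) μ := by
    rw [h2]
    simpa [Real.norm_eq_abs] using ((memLp_two_iff_integrable_sq hG).2 hG2).norm
  have h := MeasureTheory.integral_mul_le_Lp_mul_Lq_of_nonneg hpq
    (Filter.Eventually.of_forall fun x => abs_nonneg (F x))
    (Filter.Eventually.of_forall fun x => abs_nonneg (G x)) hFa hGa
  simp only [Real.rpow_two, sq_abs] at h
  calc ∫ x, |F x * G x| ∂μ = ∫ x, |F x| * |G x| ∂μ := by simp [abs_mul]
    _ ≤ (∫ x, F x ^ 2 ∂μ) ^ ((1:ℝ)/2) * (∫ x, G x ^ 2 ∂μ) ^ ((1:ℝ)/2) := h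
    _ = _ := by rw [Real.sqrt_eq_rpow, Real.sqrt_eq_rpow]

private lemma aux_mul {μ : Measure ℝ} {F G : ℝ → ℝ} (hF : AEStronglyMeasurable F μ)
    (hG : AEStronglyMeasurable G μ)
    (hF2 : Integrable (fun x => F x ^ 2) μ) (hG2 : Integrable (fun x => G x ^ 2) μ) :
    Integrable (fun x => F x * G x) μ := by
  refine Integrable.mono ((hF2.add hG2).div_const 2) (hF.mul hG) ?_
  refine Filter.Eventually.of_forall fun x => ?_
  simp only [Real.norm_eq_abs, Pi.add_apply]
  rw [abs_of_nonneg (by positivity : (0:ℝ) ≤ (F x ^ 2 + G x ^ 2) / 2), abs_mul]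
  nlinarith [sq_nonneg (|F x| - |G x|), sq_abs (F x), sq_abs (G x)]

private lemma aux_pair {p : ℝ} {f g : ℝ → ℝ} (hf : Measurable f) (hg : Measurable g)
    (hf2 : IntegrableOn (fun x => f x ^ 2 * x ^ p) (Ioi 0))
    (hg2 : IntegrableOn (fun x => g x ^ 2 * x ^ p) (Ioi 0)) :
    IntegrableOn (fun x => f x * g x * x ^ p) (Ioi 0) ∧
    (∫ x in Ioi (0:ℝ), |f x * g x| * x ^ p) ≤
      Real.sqrt (∫ x in Ioi (0:ℝ), f x ^ 2 * x ^ p) *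
        Real.sqrt (∫ x in Ioi (0:ℝ), g x ^ 2 * x ^ p) := by
  have hs : MeasurableSet (Ioi (0:ℝ)) := measurableSet_Ioi
  set F : ℝ → ℝ := fun x => f x * x ^ (p/2) with hFdef
  set G : ℝ → ℝ := fun x => g x * x ^ (p/2) with hGdef
  have hrm : Measurable fun x : ℝ => x ^ (p/2) := by
    measurability
  have hFm : Measurable F := hf.mul hrm
  have hGm : Measurable G := hg.mul hrm
  have hxx : ∀ x : ℝ, x ∈ Ioi (0:ℝ) → x ^ (p/2) * x ^ (p/2) = x ^ p := by
    intro x hx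
    rw [← Real.rpow_add hx, add_halves]
  have hFsq : ∀ x ∈ Ioi (0:ℝ), f x ^ 2 * x ^ p = F x ^ 2 := by
    intro x hx
    show f x ^ 2 * x ^ p = (f x * x ^ (p/2)) ^ 2
    rw [mul_pow, pow_two (x ^ (p/2)), hxx x hx]
  have hGsq : ∀ x ∈ Ioi (0:ℝ), g x ^ 2 * x ^ p = G x ^ 2 := by
    intro x hx
    show g x ^ 2 * x ^ p = (g x * x ^ (p/2)) ^ 2
    rw [mul_pow, pow_two (x ^ (p/2)), hxx x hx]
  have hFG : ∀ x ∈ Ioi (0:ℝ), F x * G x = f x * g x * x ^ p := by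
    intro x hx
    have : F x * G x = f x * g x * (x ^ (p/2) * x ^ (p/2)) := by
      rw [hFdef, hGdef]; ring
    rw [this, hxx x hx]
  have hF2 : Integrable (fun x => F x ^ 2) (volume.restrict (Ioi 0)) := by
    refine hf2.congr ?_
    filter_upwards [ae_restrict_mem hs] with x hx using hFsq x hx
  have hG2 : Integrable (fun x => G x ^ 2) (volume.restrict (Ioi 0)) := by
    refine hg2.congr ?_
    filter_upwards [ae_restrict_mem hs] with x hx using hGsq x hx
  constructor
  · refine (aux_mul hFm.aestronglyMeasurable hGm.aestronglyMeasurable hF2 hG2).congr ?_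
    filter_upwards [ae_restrict_mem hs] with x hx using hFG x hx
  · have h := aux_cs hFm.aestronglyMeasurable hGm.aestronglyMeasurable hF2 hG2
    have e1 : (∫ x in Ioi (0:ℝ), |f x * g x| * x ^ p) = ∫ x in Ioi (0:ℝ), |F x * G x| := by
      refine setIntegral_congr_fun hs fun x hx => ?_
      rw [hFG x hx, abs_mul (f x * g x), abs_of_nonneg (Real.rpow_nonneg (le_of_lt hx) p)]
    have e2 : (∫ x in Ioi (0:ℝ), f x ^ 2 * x ^ p) = ∫ x in Ioi (0:ℝ), F x ^ 2 :=
      setIntegral_congr_fun hs fun x hx => hFsq x hx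
    have e3 : (∫ x in Ioi (0:ℝ), g x ^ 2 * x ^ p) = ∫ x in Ioi (0:ℝ), G x ^ 2 :=
      setIntegral_congr_fun hs fun x hx => hGsq x hx
    rw [e1, e2, e3]
    exact h

/-- boundedness and coercivity of the bilinear form
`a_p(u,v) = ∫ (−2k u(2x) + u(x)) v(x) x^p dx` on `L²(x^p dx)` for
`p > 2k−1`, with coercivity constant `α = 1 − 2k · 2^{−(p+1)/2}` and the
Cauchy–Schwarz bound on the cross term. -/
theorem stmt15
    (k : ℕ) (hk : k = 1 ∨ k = 2) (p : ℝ) (hp : 2 * (k : ℝ) - 1 < p)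
    (u v : ℝ → ℝ) (hu : Measurable u) (hv : Measurable v)
    (hu2 : IntegrableOn (fun x => u x ^ 2 * x ^ p) (Ioi 0))
    (hv2 : IntegrableOn (fun x => v x ^ 2 * x ^ p) (Ioi 0)) :
    ((1 - 2 * (k : ℝ) * 2 ^ (-((p + 1) / 2))) *
        ∫ x in Ioi (0:ℝ), u x ^ 2 * x ^ p) ≤
      (∫ x in Ioi (0:ℝ), (-(2 * (k : ℝ)) * u (2 * x) + u x) * u x * x ^ p) ∧
    ((∫ x in Ioi (0:ℝ), |2 * (k : ℝ) * u (2 * x) * u x| * x ^ p) ≤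
      2 * (k : ℝ) * 2 ^ (-((p + 1) / 2)) *
        ∫ x in Ioi (0:ℝ), u x ^ 2 * x ^ p) ∧
    (|∫ x in Ioi (0:ℝ), (-(2 * (k : ℝ)) * u (2 * x) + u x) * v x * x ^ p| ≤
      (1 + 2 * (k : ℝ) * 2 ^ (-((p + 1) / 2))) *
        Real.sqrt (∫ x in Ioi (0:ℝ), u x ^ 2 * x ^ p) *
        Real.sqrt (∫ x in Ioi (0:ℝ), v x ^ 2 * x ^ p)) := by
  have hs : MeasurableSet (Ioi (0:ℝ)) := measurableSet_Ioi
  set c : ℝ := 2 ^ (-((p + 1) / 2)) with hcdef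
  set A : ℝ := ∫ x in Ioi (0:ℝ), u x ^ 2 * x ^ p with hAdef
  set B : ℝ := ∫ x in Ioi (0:ℝ), v x ^ 2 * x ^ p with hBdef
  have hc : 0 < c := Real.rpow_pos_of_pos two_pos _
  have hcc : c * c = (2:ℝ) ^ (-(p + 1)) := by
    rw [hcdef, ← Real.rpow_add two_pos]
    congr 1
    ring
  have hA : 0 ≤ A := setIntegral_nonneg hs fun x hx =>
    mul_nonneg (sq_nonneg _) (Real.rpow_nonneg (le_of_lt hx) p)
  have hB : 0 ≤ B := setIntegral_nonneg hs fun x hx =>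
    mul_nonneg (sq_nonneg _) (Real.rpow_nonneg (le_of_lt hx) p)
  have hk0 : (0:ℝ) ≤ 2 * (k : ℝ) := by positivity
  -- congruence between (y/2)^p weighted and y^p weighted
  have heq : ∀ y : ℝ, y ∈ Ioi (0:ℝ) →
      (2:ℝ) ^ (-p) * (u y ^ 2 * y ^ p) = u y ^ 2 * (y / 2) ^ p := by
    intro y hy
    rw [Real.div_rpow (le_of_lt hy) (by norm_num), Real.rpow_neg (by norm_num)]
    ring
  have h1 : IntegrableOn (fun y => u y ^ 2 * (y / 2) ^ p) (Ioi 0) :=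
    IntegrableOn.congr_fun (hu2.const_mul ((2:ℝ) ^ (-p))) heq hs
  -- integrability of the dilated square
  have hu2' : IntegrableOn (fun x => u (2 * x) ^ 2 * x ^ p) (Ioi 0) := by
    have h2 := (integrableOn_Ioi_comp_mul_left_iff
      (fun y => u y ^ 2 * (y / 2) ^ p) 0 two_pos).2 (by rwa [mul_zero])
    refine h2.congr_fun (fun x hx => ?_) hs
    show u (2 * x) ^ 2 * (2 * x / 2) ^ p = u (2 * x) ^ 2 * x ^ p
    rw [mul_div_cancel_left₀ x (two_ne_zero)]
  -- substitution identity
  have hsub : (∫ x in Ioi (0:ℝ), u (2 * x) ^ 2 * x ^ p) = (2:ℝ) ^ (-(p + 1)) * A := by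
    have h := integral_comp_mul_left_Ioi (fun y => u y ^ 2 * (y / 2) ^ p) 0 two_pos
    rw [mul_zero, smul_eq_mul] at h
    have hL : (∫ x in Ioi (0:ℝ), u (2 * x) ^ 2 * x ^ p)
        = ∫ x in Ioi (0:ℝ), u (2 * x) ^ 2 * (2 * x / 2) ^ p := by
      refine setIntegral_congr_fun hs fun x hx => ?_
      rw [mul_div_cancel_left₀ x (two_ne_zero)]
    have hR : (∫ y in Ioi (0:ℝ), u y ^ 2 * (y / 2) ^ p)
        = (2:ℝ) ^ (-p) * A := by
      rw [hAdef, ← MeasureTheory.integral_const_mul]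
      exact (setIntegral_congr_fun hs fun y hy => (heq y hy).symm)
    rw [hL, h, hR]
    rw [show -(p + 1) = -p + (-1) by ring, Real.rpow_add two_pos, Real.rpow_neg_one]
    ring
  have hsqrtsub : Real.sqrt (∫ x in Ioi (0:ℝ), u (2 * x) ^ 2 * x ^ p) = c * Real.sqrt A := by
    rw [hsub, ← hcc, show c * c * A = c ^ 2 * A by ring, Real.sqrt_mul (sq_nonneg c) A,
      Real.sqrt_sq (le_of_lt hc)]
  have hmeas2 : Measurable fun x : ℝ => u (2 * x) := hu.comp (measurable_const_mul 2)
  obtain ⟨hint_uu, hcs_uu⟩ := aux_pair hmeas2 hu hu2' hu2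
  obtain ⟨hint_uv, hcs_uv⟩ := aux_pair hmeas2 hv hu2' hv2
  obtain ⟨hint_u0v, hcs_u0v⟩ := aux_pair hu hv hu2 hv2
  have hcs_uu' : (∫ x in Ioi (0:ℝ), |u (2 * x) * u x| * x ^ p) ≤ c * A := by
    refine hcs_uu.trans_eq ?_
    rw [hsqrtsub, mul_assoc, Real.mul_self_sqrt hA]
  have hcs_uv' : (∫ x in Ioi (0:ℝ), |u (2 * x) * v x| * x ^ p)
      ≤ c * (Real.sqrt A * Real.sqrt B) := by
    refine hcs_uv.trans_eq ?_
    rw [hsqrtsub]; ring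
  -- integrability of the abs versions
  have habs_int : ∀ {f g : ℝ → ℝ}, IntegrableOn (fun x => f x * g x * x ^ p) (Ioi 0) →
      IntegrableOn (fun x => |f x * g x| * x ^ p) (Ioi 0) := by
    intro f g h
    refine h.abs.congr ?_
    filter_upwards [ae_restrict_mem hs] with x hx
    rw [abs_mul, abs_of_nonneg (Real.rpow_nonneg (le_of_lt hx) p)]
  -- splitting identity for the bilinear integrals
  have hsplit : ∀ (w : ℝ → ℝ), IntegrableOn (fun x => u (2 * x) * w x * x ^ p) (Ioi 0) →
      IntegrableOn (fun x => u x * w x * x ^ p) (Ioi 0) →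
      (∫ x in Ioi (0:ℝ), (-(2 * (k : ℝ)) * u (2 * x) + u x) * w x * x ^ p)
        = -(2 * (k : ℝ)) * (∫ x in Ioi (0:ℝ), u (2 * x) * w x * x ^ p)
          + ∫ x in Ioi (0:ℝ), u x * w x * x ^ p := by
    intro w hw1 hw2
    rw [← MeasureTheory.integral_const_mul, ← integral_add (hw1.const_mul _) hw2]
    refine setIntegral_congr_fun hs fun x hx => ?_
    ring
  refine ⟨?_, ?_, ?_⟩
  · -- coercivity
    have huu : IntegrableOn (fun x => u x * u x * x ^ p) (Ioi 0) := by
      refine hu2.congr_fun (fun x hx => ?_) hs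
      simp only [pow_two]
    have hI := hsplit u hint_uu huu
    have hIA : (∫ x in Ioi (0:ℝ), u x * u x * x ^ p) = A := by
      rw [hAdef]
      refine setIntegral_congr_fun hs fun x hx => ?_
      rw [pow_two]
    have hmono : (∫ x in Ioi (0:ℝ), u (2 * x) * u x * x ^ p)
        ≤ ∫ x in Ioi (0:ℝ), |u (2 * x) * u x| * x ^ p := by
      refine setIntegral_mono_on hint_uu (habs_int hint_uu) hs fun x hx => ?_
      exact mul_le_mul_of_nonneg_right (le_abs_self _) (Real.rpow_nonneg (le_of_lt hx) p)
    have hIle : (∫ x in Ioi (0:ℝ), u (2 * x) * u x * x ^ p) ≤ c * A :=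
      hmono.trans hcs_uu'
    rw [hI, hIA]
    nlinarith [mul_le_mul_of_nonneg_left hIle hk0]
  · -- cross-term bound
    have e : (∫ x in Ioi (0:ℝ), |2 * (k : ℝ) * u (2 * x) * u x| * x ^ p)
        = 2 * (k : ℝ) * ∫ x in Ioi (0:ℝ), |u (2 * x) * u x| * x ^ p := by
      rw [← MeasureTheory.integral_const_mul]
      refine setIntegral_congr_fun hs fun x hx => ?_
      rw [mul_assoc (2 * (k:ℝ)), abs_mul, abs_of_nonneg hk0]
      ring
    rw [e]
    calc 2 * (k : ℝ) * ∫ x in Ioi (0:ℝ), |u (2 * x) * u x| * x ^ p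
        ≤ 2 * (k : ℝ) * (c * A) := mul_le_mul_of_nonneg_left hcs_uu' hk0
      _ = 2 * (k : ℝ) * c * A := by ring
  · -- boundedness
    have hI := hsplit v hint_uv hint_u0v
    have habs : ∀ f g : ℝ → ℝ, |∫ x in Ioi (0:ℝ), f x * g x * x ^ p|
        ≤ ∫ x in Ioi (0:ℝ), |f x * g x| * x ^ p := by
      intro f g
      have hn := norm_integral_le_integral_norm (μ := volume.restrict (Ioi 0))
        (fun x => f x * g x * x ^ p)
      simp only [Real.norm_eq_abs] at hn
      refine hn.trans (le_of_eq (setIntegral_congr_fun hs fun x hx => ?_))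
      rw [abs_mul, abs_of_nonneg (Real.rpow_nonneg (le_of_lt hx) p)]
    have h1 : |∫ x in Ioi (0:ℝ), u (2 * x) * v x * x ^ p|
        ≤ c * (Real.sqrt A * Real.sqrt B) :=
      (habs (fun x => u (2 * x)) v).trans hcs_uv'
    have h2 : |∫ x in Ioi (0:ℝ), u x * v x * x ^ p| ≤ Real.sqrt A * Real.sqrt B :=
      (habs u v).trans hcs_u0v
    rw [hI]
    have hsq : 0 ≤ Real.sqrt A * Real.sqrt B := by positivity
    calc |(-(2 * (k : ℝ)) * (∫ x in Ioi (0:ℝ), u (2 * x) * v x * x ^ p)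
            + ∫ x in Ioi (0:ℝ), u x * v x * x ^ p)|
        ≤ |(-(2 * (k : ℝ))) * (∫ x in Ioi (0:ℝ), u (2 * x) * v x * x ^ p)|
            + |∫ x in Ioi (0:ℝ), u x * v x * x ^ p| := abs_add_le _ _
      _ ≤ 2 * (k : ℝ) * (c * (Real.sqrt A * Real.sqrt B)) + Real.sqrt A * Real.sqrt B := by
          rw [abs_mul, abs_neg, abs_of_nonneg hk0]
          exact add_le_add (mul_le_mul_of_nonneg_left h1 hk0) h2
      _ = (1 + 2 * (k : ℝ) * c) * Real.sqrt A * Real.sqrt B := by ring
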